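/- Let κ be an infinite cardinal. Then the complete graph K_κ has a factorization into κ perfect matchings, i.e., E(K_κ) can be partitioned into κ sets each of which is a perfect matching of K_κ. -/

import Mathlib

open Cardinal

universe u

/-- `G` is `κ`-regular: every vertex has degree (neighbourhood cardinality) exactly `κ`. -/
def SimpleGraph.CardRegular {V : Type u} (G : SimpleGraph V) (κ : Cardinal.{u}) : Prop :=
  ∀ v : V, #(G.neighborSet v) = κ

/-- `G` has no isolated vertices. -/
def SimpleGraph.NoIsolatedVerts {V : Type u} (G : SimpleGraph V) : Prop :=
  ∀ v : V, ∃ w : V, G.Adj v w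

/-- A factorization of `G`: a family of spanning subgraphs, pairwise edge-disjoint,
whose edge sets cover `E(G)`. -/
def SimpleGraph.IsFactorization {V : Type u} {ι : Type u} (G : SimpleGraph V)
    (F : ι → SimpleGraph V) : Prop :=
  (∀ i, F i ≤ G) ∧ (Pairwise fun i j => Disjoint (F i).edgeSet (F j).edgeSet) ∧
    (⋃ i, (F i).edgeSet) = G.edgeSet

/-- In the forest `F` rooted at `v₀`, `u` is a child of `w`. -/
def SimpleGraph.IsChild {V : Type u} (F : SimpleGraph V) (v₀ u w : V) : Prop :=
  F.Adj w u ∧ F.Reachable v₀ u ∧ F.dist v₀ u = F.dist v₀ w + 1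

/-- The graph with edges `v_j v_i` for `v_i ∈ C j`, `j < i`. -/
def childGraph {V I : Type u} [LT I] (v : I ≃ V) (C : I → Set V) : SimpleGraph V :=
  SimpleGraph.fromEdgeSet {e | ∃ i j : I, j < i ∧ (v i : V) ∈ C j ∧ e = s(v j, v i)}

/-- Disjoint union of `ι`-many copies of `T`. -/
def copiesGraph (ι : Type u) {W : Type u} (T : SimpleGraph W) : SimpleGraph (ι × W) where
  Adj p q := p.1 = q.1 ∧ T.Adj p.2 q.2
  symm := ⟨by rintro p q ⟨h1, h2⟩; exact ⟨h1.symm, h2.symm⟩⟩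
  loopless := ⟨by rintro p ⟨-, h⟩; exact T.loopless.irrefl _ h⟩

/-- `K_κ` has a factorization into `κ` perfect matchings. -/
theorem stmt_16 (κ : Cardinal.{u}) (hκ : ℵ₀ ≤ κ) :
    ∃ F : κ.ord.ToType → SimpleGraph κ.ord.ToType,
      (⊤ : SimpleGraph κ.ord.ToType).IsFactorization F ∧
      ∀ i, ∀ v : κ.ord.ToType, ∃! w : κ.ord.ToType, (F i).Adj v w := by
  set V := κ.ord.ToType with hVdef
  have hV : #V = κ := Cardinal.mk_ord_toType κ
  have hinf : Infinite V := by rw [Cardinal.infinite_iff, hV]; exact hκ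
  set W := V →₀ ZMod 2 with hWdef
  -- every element of W is its own negative
  have hself : ∀ x : W, x + x = 0 := by
    intro x
    ext a
    have : ∀ b : ZMod 2, b + b = 0 := by decide
    rw [Finsupp.add_apply]
    exact this _
  have hW : #W = κ := by
    rw [hWdef, Cardinal.mk_finsupp_lift_of_infinite V (ZMod 2), hV, Cardinal.mk_fintype]
    simp only [ZMod.card, Cardinal.lift_natCast, Cardinal.lift_id, Cardinal.lift_uzero]
    exact max_eq_left ((Cardinal.nat_lt_aleph0 2).le.trans hκ)
  have hinfW : Infinite W := by rw [Cardinal.infinite_iff, hW]; exact hκ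
  have hWnz : #(↥({0}ᶜ : Set W)) = κ := by
    rw [Cardinal.mk_compl_of_infinite ({0} : Set W), hW]
    rw [Cardinal.mk_singleton, hW]
    exact Cardinal.one_lt_aleph0.trans_le hκ
  obtain ⟨e⟩ : Nonempty (V ≃ W) := Cardinal.eq.1 (hV.trans hW.symm)
  obtain ⟨f⟩ : Nonempty (V ≃ ↥({0}ᶜ : Set W)) := Cardinal.eq.1 (hV.trans hWnz.symm)
  have hfnz : ∀ i : V, (f i : W) ≠ 0 := fun i => (f i).2
  -- cancellation
  have hcan : ∀ x y : W, x + y = 0 → x = y := by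
    intro x y h
    have := congrArg (· + y) h
    simpa [add_assoc, hself y] using this
  refine ⟨fun i => ⟨fun v w => e v + e w = (f i : W), ?_, ?_⟩, ⟨?_, ?_, ?_⟩, ?_⟩
  · exact ⟨by intro v w h; rwa [add_comm] at h⟩
  · exact ⟨by intro v h; rw [hself] at h; exact (hfnz _) h.symm⟩
  · intro i v w h
    exact SimpleGraph.top_adj v w |>.2 (fun hvw => by subst hvw; simp [hself] at h; exact hfnz i h.symm)
  · intro i j hij
    rw [Set.disjoint_left]
    intro x
    induction x using Sym2.ind with
    | _ v w =>
      intro h1 h2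
      rw [SimpleGraph.mem_edgeSet] at h1 h2
      have h1' : e v + e w = (f i : W) := h1
      have h2' : e v + e w = (f j : W) := h2
      exact hij (f.injective (Subtype.ext (h1'.symm.trans h2')))
  · ext x
    induction x using Sym2.ind with
    | _ v w =>
      simp only [Set.mem_iUnion, SimpleGraph.mem_edgeSet, SimpleGraph.top_adj]
      constructor
      · rintro ⟨i, hi⟩
        intro hvw
        subst hvw
        rw [hself] at hi
        exact hfnz i hi.symm
      · intro hvw
        have hne : e v + e w ≠ 0 := fun h => hvw (e.injective (hcan _ _ h))
        exact ⟨f.symm ⟨e v + e w, hne⟩, by simp⟩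
  · intro i v
    refine ⟨e.symm (e v + (f i : W)), ?_, ?_⟩
    · show e v + e (e.symm _) = _
      rw [e.apply_symm_apply, ← add_assoc, hself, zero_add]
    · intro w hw
      have : e w = e v + (f i : W) := by
        rw [← hw, ← add_assoc, hself, zero_add]
      exact e.injective (by rw [this, e.apply_symm_apply])
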